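/- Let p be a prime and n, β ≥ 1 integers. Let u ∈ GSp₄(ℤ_p) satisfy u ≡ I (mod pⁿ), and let m ∈ GSp₄(ℤ_p) be block diagonal (that is, m₁₃ = m₁₄ = m₂₃ = m₂₄ = m₃₁ = m₃₂ = m₄₁ = m₄₂ = 0) with m₂₁ ≡ m₄₃ ≡ 0 (mod p^β). Then there exist unique z ∈ p^{min(n,β)}·ℤ_p, a, b ∈ pⁿ·ℤ_p, and x ∈ GSp₄(ℤ_p) with x₂₁ = x₃₁ = x₄₁ = x₄₂ = x₄₃ = 0, such that u·m = n(z,a,b)·x. -/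

import Mathlib

open Matrix

noncomputable section

/-- The symplectic form matrix `J`. -/
def Jmat (R : Type*) [CommRing R] : Matrix (Fin 4) (Fin 4) R :=
  !![0, 0, 0, 1;
     0, 0, 1, 0;
     0, -1, 0, 0;
     -1, 0, 0, 0]

/-- The unipotent matrix `n(z,a,b)`. -/
def nmat {R : Type*} [CommRing R] (z a b : R) : Matrix (Fin 4) (Fin 4) R :=
  !![1, 0, 0, 0;
     z, 1, 0, 0;
     a, 0, 1, 0;
     b, a, -z, 1]

/-- Membership in `GSp₄(R)`: `gᵀ J g = s • J` for some unit `s`. -/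
def IsGSp4 {R : Type*} [CommRing R] (g : Matrix (Fin 4) (Fin 4) R) : Prop :=
  ∃ s : Rˣ, gᵀ * Jmat R * g = (s : R) • Jmat R

lemma nmat_mul {R : Type*} [CommRing R] (z a b z' a' b' : R) :
    nmat z a b * nmat z' a' b' = nmat (z+z') (a+a') (b+b'+a*z'-z*a') := by
  ext i j
  fin_cases i <;> fin_cases j <;>
    simp [nmat, Matrix.mul_apply, Fin.sum_univ_four, Matrix.vecHead, Matrix.vecTail] <;> ring

lemma nmat_zero {R : Type*} [CommRing R] : (nmat 0 0 0 : Matrix (Fin 4) (Fin 4) R) = 1 := by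
  ext i j; fin_cases i <;> fin_cases j <;>
    simp [nmat, Matrix.one_apply, Matrix.vecHead, Matrix.vecTail]

lemma nmat_inv {R : Type*} [CommRing R] (z a b : R) :
    nmat z a b * nmat (-z) (-a) (-b) = 1 := by
  rw [nmat_mul, show z + -z = (0:R) by ring, show a + -a = (0:R) by ring,
    show b + -b + a * -z - z * -a = (0:R) by ring]
  exact nmat_zero

lemma nmat_inv' {R : Type*} [CommRing R] (z a b : R) :
    nmat (-z) (-a) (-b) * nmat z a b = 1 := by
  simpa using nmat_inv (-z) (-a) (-b)

lemma nmat_symp {R : Type*} [CommRing R] (z a b : R) :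
    (nmat z a b)ᵀ * Jmat R * nmat z a b = Jmat R := by
  ext i j
  fin_cases i <;> fin_cases j <;>
    simp [nmat, Jmat, Matrix.mul_apply, Fin.sum_univ_four, Matrix.vecHead, Matrix.vecTail] <;>
    ring

lemma det_Jmat (R : Type*) [CommRing R] : (Jmat R).det = 1 := by
  simp [Jmat, Matrix.det_succ_row_zero, Fin.sum_univ_succ,
    show (Fin.castSucc (2 : Fin 3) : Fin 4) = 2 by rfl]
  norm_num [show (Fin.succAbove (3 : Fin 4) (2 : Fin 3)) = 2 by rfl]
  rfl

lemma det_block {R : Type*} [CommRing R] (m : Matrix (Fin 4) (Fin 4) R)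
    (hm13 : m 0 2 = 0) (hm14 : m 0 3 = 0) (hm23 : m 1 2 = 0) (hm24 : m 1 3 = 0)
    (hm31 : m 2 0 = 0) (hm32 : m 2 1 = 0) (hm41 : m 3 0 = 0) (hm42 : m 3 1 = 0) :
    m.det = (m 0 0 * m 1 1 - m 0 1 * m 1 0) * (m 2 2 * m 3 3 - m 2 3 * m 3 2) := by
  simp [Matrix.det_succ_row_zero, Fin.sum_univ_succ, hm13, hm14, hm23, hm24, hm31, hm32,
    hm41, hm42, show (Fin.succ (2:Fin 3) : Fin 4) = 3 by rfl,
    show (Fin.castSucc (2 : Fin 3) : Fin 4) = 2 by rfl,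
    show (Fin.succAbove (1 : Fin 4) (2 : Fin 3) : Fin 4) = 3 by rfl]
  ring

lemma padic_isUnit_iff_not_dvd {p : ℕ} [Fact p.Prime] (x : ℤ_[p]) :
    IsUnit x ↔ ¬ (p:ℤ_[p]) ∣ x := by
  rw [PadicInt.isUnit_iff, ← PadicInt.norm_lt_one_iff_dvd]
  constructor
  · intro h h'; rw [h] at h'; exact lt_irrefl 1 h'
  · intro h; exact le_antisymm (PadicInt.norm_le_one x) (not_lt.mp h)

set_option maxHeartbeats 1000000 in
theorem stmt5 (p : ℕ) [Fact p.Prime] (n β : ℕ) (hn : 1 ≤ n) (hβ : 1 ≤ β)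
    (u m : Matrix (Fin 4) (Fin 4) ℤ_[p])
    (hu : IsGSp4 u)
    -- u ≡ I (mod pⁿ)
    (hucong : ∀ i j, (p : ℤ_[p]) ^ n ∣ (u - 1) i j)
    (hm : IsGSp4 m)
    -- m is block diagonal
    (hm13 : m 0 2 = 0) (hm14 : m 0 3 = 0) (hm23 : m 1 2 = 0) (hm24 : m 1 3 = 0)
    (hm31 : m 2 0 = 0) (hm32 : m 2 1 = 0) (hm41 : m 3 0 = 0) (hm42 : m 3 1 = 0)
    -- m₂₁ ≡ m₄₃ ≡ 0 (mod p^β)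
    (hm21 : (p : ℤ_[p]) ^ β ∣ m 1 0) (hm43 : (p : ℤ_[p]) ^ β ∣ m 3 2) :
    ∃! w : ℤ_[p] × ℤ_[p] × ℤ_[p] × Matrix (Fin 4) (Fin 4) ℤ_[p],
      (p : ℤ_[p]) ^ (min n β) ∣ w.1 ∧
      (p : ℤ_[p]) ^ n ∣ w.2.1 ∧
      (p : ℤ_[p]) ^ n ∣ w.2.2.1 ∧
      IsGSp4 w.2.2.2 ∧
      w.2.2.2 1 0 = 0 ∧ w.2.2.2 2 0 = 0 ∧ w.2.2.2 3 0 = 0 ∧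
      w.2.2.2 3 1 = 0 ∧ w.2.2.2 3 2 = 0 ∧
      u * m = nmat w.1 w.2.1 w.2.2.1 * w.2.2.2 := by
  obtain ⟨su, hsu⟩ := hu
  obtain ⟨sm, hsm⟩ := hm
  have hp : (p:ℤ_[p]) ∣ (p:ℤ_[p])^n := dvd_pow_self _ (by omega)
  -- congruence facts about u
  have hu00 : (p:ℤ_[p])^n ∣ u 0 0 - 1 := by
    simpa [Matrix.sub_apply, Matrix.one_apply] using hucong 0 0
  have hu01 : (p:ℤ_[p])^n ∣ u 0 1 := by
    simpa [Matrix.sub_apply, Matrix.one_apply] using hucong 0 1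
  have hu10 : (p:ℤ_[p])^n ∣ u 1 0 := by
    simpa [Matrix.sub_apply, Matrix.one_apply] using hucong 1 0
  have hu20 : (p:ℤ_[p])^n ∣ u 2 0 := by
    simpa [Matrix.sub_apply, Matrix.one_apply] using hucong 2 0
  have hu21 : (p:ℤ_[p])^n ∣ u 2 1 := by
    simpa [Matrix.sub_apply, Matrix.one_apply] using hucong 2 1
  have hu30 : (p:ℤ_[p])^n ∣ u 3 0 := by
    simpa [Matrix.sub_apply, Matrix.one_apply] using hucong 3 0
  have hu31 : (p:ℤ_[p])^n ∣ u 3 1 := by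
    simpa [Matrix.sub_apply, Matrix.one_apply] using hucong 3 1
  -- column 0 of g = u * m
  have hg0 : ∀ i, (u * m) i 0 = u i 0 * m 0 0 + u i 1 * m 1 0 := by
    intro i
    simp [Matrix.mul_apply, Fin.sum_univ_four, hm31, hm41]
  -- det m is a unit
  have hdetm : IsUnit m.det := by
    have h1 := congrArg Matrix.det hsm
    rw [Matrix.det_mul, Matrix.det_mul, Matrix.det_transpose, Matrix.det_smul, det_Jmat] at h1
    simp only [mul_one, Fintype.card_fin] at h1
    exact isUnit_of_dvd_unit ⟨m.det, h1.symm⟩ ((sm.isUnit).pow 4)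
  have hA : IsUnit (m 0 0 * m 1 1 - m 0 1 * m 1 0) := by
    rw [det_block m hm13 hm14 hm23 hm24 hm31 hm32 hm41 hm42] at hdetm
    exact isUnit_of_mul_isUnit_left hdetm
  have hpm10 : (p:ℤ_[p]) ∣ m 1 0 := (dvd_pow_self _ (by omega : β ≠ 0)).trans hm21
  have hm00 : ¬ (p:ℤ_[p]) ∣ m 0 0 := by
    intro h
    exact (padic_isUnit_iff_not_dvd _).mp hA
      (dvd_sub (h.mul_right _) (hpm10.mul_left _))
  -- g 0 0 is a unit
  have hg00 : IsUnit ((u * m) 0 0) := by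
    rw [padic_isUnit_iff_not_dvd]
    intro h
    rw [hg0 0] at h
    have h2 : (p:ℤ_[p]) ∣ u 0 1 * m 1 0 := ((hp.trans hu01)).mul_right _
    have h3 : (p:ℤ_[p]) ∣ u 0 0 * m 0 0 := by
      have := dvd_sub h h2
      simpa using this
    rcases (PadicInt.prime_p).2.2 _ _ h3 with h' | h'
    · have h4 : (p:ℤ_[p]) ∣ (1:ℤ_[p]) := by
        have := dvd_sub h' (hp.trans hu00)
        simpa using this
      exact (PadicInt.prime_p).not_dvd_one h4
    · exact hm00 h'
  obtain ⟨G, hG⟩ := hg00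
  set v : ℤ_[p] := ((G⁻¹ : ℤ_[p]ˣ) : ℤ_[p]) with hvdef
  have hv : (u * m) 0 0 * v = 1 := by
    rw [← hG, hvdef]; exact_mod_cast G.mul_inv
  set z : ℤ_[p] := (u * m) 1 0 * v with hz
  set a : ℤ_[p] := (u * m) 2 0 * v with ha
  set b : ℤ_[p] := ((u * m) 3 0 - a * (u * m) 1 0 + z * (u * m) 2 0) * v with hb
  set x : Matrix (Fin 4) (Fin 4) ℤ_[p] := nmat (-z) (-a) (-b) * (u * m) with hx
  -- factorization
  have hfact : u * m = nmat z a b * x := by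
    rw [hx, ← Matrix.mul_assoc, nmat_inv, Matrix.one_mul]
  -- entries of x
  have hx0 : ∀ j, x 0 j = (u * m) 0 j := by
    intro j
    rw [hx]
    simp [nmat, Matrix.mul_apply, Fin.sum_univ_four, Matrix.vecHead, Matrix.vecTail]
  have hx1 : ∀ j, x 1 j = -z * (u * m) 0 j + (u * m) 1 j := by
    intro j
    rw [hx]
    simp [nmat, Matrix.mul_apply, Fin.sum_univ_four, Matrix.vecHead, Matrix.vecTail]
  have hx2 : ∀ j, x 2 j = -a * (u * m) 0 j + (u * m) 2 j := by
    intro j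
    rw [hx]
    simp [nmat, Matrix.mul_apply, Fin.sum_univ_four, Matrix.vecHead, Matrix.vecTail]
  have hx3 : ∀ j, x 3 j = -b * (u * m) 0 j + -a * (u * m) 1 j + z * (u * m) 2 j + (u * m) 3 j := by
    intro j
    rw [hx]
    simp [nmat, Matrix.mul_apply, Fin.sum_univ_four, Matrix.vecHead, Matrix.vecTail]
  have hx10 : x 1 0 = 0 := by
    rw [hx1 0, hz]; linear_combination (-(u*m) 1 0) * hv
  have hx20 : x 2 0 = 0 := by
    rw [hx2 0, ha]; linear_combination (-(u*m) 2 0) * hv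
  have hx30 : x 3 0 = 0 := by
    rw [hx3 0, hb]
    linear_combination (-((u*m) 3 0 - a * (u*m) 1 0 + z * (u*m) 2 0)) * hv
  -- symplectic facts
  have hgsymp : (u * m)ᵀ * Jmat ℤ_[p] * (u * m)
      = ((su * sm : ℤ_[p]ˣ) : ℤ_[p]) • Jmat ℤ_[p] := by
    have e : (u * m)ᵀ * Jmat ℤ_[p] * (u * m) = mᵀ * (uᵀ * Jmat ℤ_[p] * u) * m := by
      rw [Matrix.transpose_mul]
      simp only [Matrix.mul_assoc]
    rw [e, hsu, Matrix.mul_smul, Matrix.smul_mul, hsm, smul_smul, Units.val_mul]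
  have hxsymp : xᵀ * Jmat ℤ_[p] * x = ((su * sm : ℤ_[p]ˣ) : ℤ_[p]) • Jmat ℤ_[p] := by
    rw [hx, Matrix.transpose_mul]
    calc ((u*m)ᵀ * (nmat (-z) (-a) (-b))ᵀ) * Jmat ℤ_[p] * (nmat (-z) (-a) (-b) * (u*m))
        = (u*m)ᵀ * ((nmat (-z) (-a) (-b))ᵀ * Jmat ℤ_[p] * nmat (-z) (-a) (-b)) * (u*m) := by
          simp only [Matrix.mul_assoc]
      _ = (u*m)ᵀ * Jmat ℤ_[p] * (u*m) := by rw [nmat_symp]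
      _ = _ := hgsymp
  have hx00u : IsUnit (x 0 0) := by rw [hx0 0, ← hG]; exact G.isUnit
  have hx31 : x 3 1 = 0 := by
    have e : (xᵀ * Jmat ℤ_[p] * x) 0 1 = (((su * sm : ℤ_[p]ˣ) : ℤ_[p]) • Jmat ℤ_[p]) 0 1 := by
      rw [hxsymp]
    simp [Matrix.mul_apply, Fin.sum_univ_four, Jmat, Matrix.transpose_apply, Matrix.smul_apply,
      Matrix.vecHead, Matrix.vecTail, hx10, hx20, hx30] at e
    exact e.resolve_left hx00u.ne_zero
  have hx32 : x 3 2 = 0 := by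
    have e : (xᵀ * Jmat ℤ_[p] * x) 0 2 = (((su * sm : ℤ_[p]ˣ) : ℤ_[p]) • Jmat ℤ_[p]) 0 2 := by
      rw [hxsymp]
    simp [Matrix.mul_apply, Fin.sum_univ_four, Jmat, Matrix.transpose_apply, Matrix.smul_apply,
      Matrix.vecHead, Matrix.vecTail, hx10, hx20, hx30] at e
    exact e.resolve_left hx00u.ne_zero
  -- divisibility
  have hdg10 : (p:ℤ_[p])^(min n β) ∣ (u * m) 1 0 := by
    rw [hg0 1]
    exact dvd_add (((pow_dvd_pow _ (min_le_left n β)).trans hu10).mul_right _)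
      (((pow_dvd_pow _ (min_le_right n β)).trans hm21).mul_left _)
  have hdg20 : (p:ℤ_[p])^n ∣ (u * m) 2 0 := by
    rw [hg0 2]
    exact dvd_add (hu20.mul_right _) (hu21.mul_right _)
  have hdg30 : (p:ℤ_[p])^n ∣ (u * m) 3 0 := by
    rw [hg0 3]
    exact dvd_add (hu30.mul_right _) (hu31.mul_right _)
  have hdz : (p:ℤ_[p])^(min n β) ∣ z := by rw [hz]; exact hdg10.mul_right _
  have hda : (p:ℤ_[p])^n ∣ a := by rw [ha]; exact hdg20.mul_right _
  have hdb : (p:ℤ_[p])^n ∣ b := by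
    rw [hb]
    exact ((dvd_sub hdg30 (hda.mul_right _)).add (hdg20.mul_left _)).mul_right _
  refine ⟨⟨z, a, b, x⟩, ⟨hdz, hda, hdb, ⟨su * sm, hxsymp⟩, hx10, hx20, hx30, hx31, hx32, hfact⟩, ?_⟩
  -- uniqueness
  rintro ⟨z', a', b', x'⟩ ⟨-, -, -, -, h10', h20', h30', -, -, heq'⟩
  dsimp only at h10' h20' h30' heq'
  simp only [Prod.mk.injEq]
  -- column-0 entries of the primed factorization
  have k0 : (nmat z' a' b' * x') 0 0 = x' 0 0 := by
    simp [nmat, Matrix.mul_apply, Fin.sum_univ_four, Matrix.vecHead, Matrix.vecTail]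
  have k1 : (nmat z' a' b' * x') 1 0 = z' * x' 0 0 + x' 1 0 := by
    simp [nmat, Matrix.mul_apply, Fin.sum_univ_four, Matrix.vecHead, Matrix.vecTail]
  have k2 : (nmat z' a' b' * x') 2 0 = a' * x' 0 0 + x' 2 0 := by
    simp [nmat, Matrix.mul_apply, Fin.sum_univ_four, Matrix.vecHead, Matrix.vecTail]
  have k3 : (nmat z' a' b' * x') 3 0
      = b' * x' 0 0 + a' * x' 1 0 + -(z' * x' 2 0) + x' 3 0 := by
    simp [nmat, Matrix.mul_apply, Fin.sum_univ_four, Matrix.vecHead, Matrix.vecTail]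
  have e0 : (u * m) 0 0 = x' 0 0 := by rw [heq', k0]
  have e1 : (u * m) 1 0 = z' * x' 0 0 := by rw [heq', k1, h10', add_zero]
  have e2 : (u * m) 2 0 = a' * x' 0 0 := by rw [heq', k2, h20', add_zero]
  have e3 : (u * m) 3 0 = b' * x' 0 0 := by
    rw [heq', k3, h10', h20', h30', mul_zero, mul_zero, add_zero, neg_zero, add_zero, add_zero]
  rw [← e0] at e1 e2 e3
  have hz' : z' = z := by
    rw [hz, e1, mul_assoc, hv, mul_one]
  have ha' : a' = a := by
    rw [ha, e2, mul_assoc, hv, mul_one]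
  have hb' : b' = b := by
    have hsimp : (u * m) 3 0 - a * (u * m) 1 0 + z * (u * m) 2 0 = (u * m) 3 0 := by
      rw [hz, ha]; ring
    rw [hb, hsimp, e3, mul_assoc, hv, mul_one]
  have hx' : x' = x := by
    have heq2 : nmat z a b * x' = nmat z a b * x := by
      rw [← hz', ← ha', ← hb', ← heq', hfact, hz', ha', hb']
    calc x' = (nmat (-z) (-a) (-b) * nmat z a b) * x' := by rw [nmat_inv', Matrix.one_mul]
      _ = nmat (-z) (-a) (-b) * (nmat z a b * x') := by rw [Matrix.mul_assoc]
      _ = nmat (-z) (-a) (-b) * (nmat z a b * x) := by rw [heq2]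
      _ = (nmat (-z) (-a) (-b) * nmat z a b) * x := by rw [Matrix.mul_assoc]
      _ = x := by rw [nmat_inv', Matrix.one_mul]
  exact ⟨hz', ha', hb', hx'⟩
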